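/- arXiv:1407.2134 — 2 statements merged into one kernel-verified Lean document; each statement's English description precedes it below -/
import Mathlib

section
/- Let a be an even positive integer and let d be an integer. Then Σ_{n=0}^{a-1} e^{iπ(2dn - n²)/a} = √a · e^{iπ(d²/a - 1/4)}, where √a denotes the positive real square root of a. -/
open Complex Finset Filter Topology Real

noncomputable section

lemma ofReal_cpow_half {x : ℝ} (hx : 0 ≤ x) :
    (x : ℂ) ^ (1/2 : ℂ) = (Real.sqrt x : ℂ) := by
  rw [Real.sqrt_eq_rpow, Complex.ofReal_cpow hx]
  norm_num

lemma cpow_half_ofReal_mul {r : ℝ} (hr : 0 < r) {z : ℂ} (hz : z ≠ 0) :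
    ((r : ℂ) * z) ^ (1/2 : ℂ) = (r : ℂ) ^ (1/2 : ℂ) * z ^ (1/2 : ℂ) := by
  have hr' : (r : ℂ) ≠ 0 := by exact_mod_cast hr.ne'
  rw [Complex.cpow_def_of_ne_zero (mul_ne_zero hr' hz),
      Complex.cpow_def_of_ne_zero hz, Complex.cpow_def_of_ne_zero hr',
      Complex.log_ofReal_mul hr hz, add_mul, Complex.exp_add, Complex.ofReal_log hr.le]

-- theta tends to 1
lemma theta_tendsto_one {z : ℂ} (hz : z.im = 0) {σ : ℝ → ℂ}
    (hσ : Tendsto (fun t => (σ t).im) (𝓝[>] (0:ℝ)) atTop) :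
    Tendsto (fun t => jacobiTheta₂ z (σ t)) (𝓝[>] (0:ℝ)) (𝓝 1) := by
  have key : Tendsto (fun t => ∑' n : ℤ, jacobiTheta₂_term n z (σ t)) (𝓝[>] (0:ℝ))
      (𝓝 (∑' n : ℤ, if n = (0:ℤ) then (1:ℂ) else 0)) := by
    apply tendsto_tsum_of_dominated_convergence
      (bound := fun n : ℤ => Real.exp (-π * ((1:ℝ) * n ^ 2 - 2 * 0 * |n|)))
    · simpa using summable_pow_mul_jacobiTheta₂_term_bound 0 one_pos 0
    · intro n
      rcases eq_or_ne n 0 with rfl | hn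
      · simp [jacobiTheta₂_term]
      · simp only [hn, if_false]
        rw [tendsto_zero_iff_norm_tendsto_zero]
        simp only [norm_jacobiTheta₂_term, hz, mul_zero, sub_zero]
        have h1 : Tendsto (fun y : ℝ => -π * (n:ℝ) ^ 2 * y) atTop atBot := by
          apply Tendsto.const_mul_atTop_of_neg ?_ tendsto_id
          have : (0:ℝ) < (n:ℝ)^2 := by positivity
          nlinarith [Real.pi_pos]
        exact (Real.tendsto_exp_atBot.comp (h1.comp hσ))
    · filter_upwards [hσ.eventually_ge_atTop 1] with t ht
      intro n
      exact norm_jacobiTheta₂_term_le one_pos (by simp [hz]) ht n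
  simpa [tsum_ite_eq, jacobiTheta₂] using key


lemma I_cpow_half : (I : ℂ) ^ (1/2 : ℂ) = Complex.exp (π * I / 4) := by
  rw [Complex.cpow_def_of_ne_zero I_ne_zero, Complex.log_I]
  congr 1
  ring

section main
variable {a : ℕ} (ha : 0 < a)

/-- the scalar factor -/
def phi (a : ℕ) (t : ℝ) : ℂ :=
  a * Real.sqrt (1/(a:ℝ)^2 + t^2) /
    (((t:ℂ) + I/a) ^ (1/2:ℂ) * (1 + I*a*t) ^ (1/2:ℂ))

include ha

lemma phi_zero : phi a 0 = (Real.sqrt a : ℂ) * Complex.exp (-π * I / 4) := by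
  have haR : (0:ℝ) < a := by exact_mod_cast ha
  have haC : ((a:ℝ):ℂ) ≠ 0 := by exact_mod_cast haR.ne'
  have h1 : ((0:ℝ):ℂ) + I/a = ((a:ℝ)⁻¹ : ℝ) * I := by
    push_cast; ring
  have h2 : (((a:ℝ)⁻¹ : ℝ):ℂ) ^ (1/2:ℂ) = ((Real.sqrt a)⁻¹ : ℝ) := by
    rw [ofReal_cpow_half (by positivity), Real.sqrt_inv]
  have hs : (0:ℝ) < Real.sqrt a := Real.sqrt_pos.mpr haR
  rw [phi, h1, cpow_half_ofReal_mul (by positivity) I_ne_zero, h2, I_cpow_half]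
  have h3 : Real.sqrt (1/(a:ℝ)^2 + 0^2) = (a:ℝ)⁻¹ := by
    rw [show 1/(a:ℝ)^2 + 0^2 = ((a:ℝ)⁻¹)^2 by ring, Real.sqrt_sq (by positivity)]
  rw [h3]
  have he : Complex.exp (π * I / 4) ≠ 0 := Complex.exp_ne_zero _
  have haC' : (a:ℂ) ≠ 0 := by exact_mod_cast ha.ne'
  field_simp
  push_cast
  simp only [mul_zero, add_zero, Complex.one_cpow, mul_one]
  field_simp
  have hkey : cexp (-(↑π*I)/4) * cexp (↑π*I/4) = 1 := by
    rw [← Complex.exp_add, show (-(↑π*I)/4 + ↑π*I/4 : ℂ) = 0 by ring, Complex.exp_zero]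
  rw [neg_div] at hkey
  linear_combination (-(Real.sqrt (a:ℝ) : ℂ)) * hkey

lemma phi_tendsto :
    Tendsto (phi a) (𝓝[>] (0:ℝ)) (𝓝 ((Real.sqrt a : ℂ) * Complex.exp (-π * I / 4))) := by
  have haR : (0:ℝ) < a := by exact_mod_cast ha
  rw [← phi_zero ha]
  apply tendsto_nhdsWithin_of_tendsto_nhds
  have him : (((0:ℝ):ℂ) + I/a).im = (a:ℝ)⁻¹ := by
    rw [show ((0:ℝ):ℂ) + I/a = ((a:ℝ)⁻¹ : ℝ) * I by push_cast; ring]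
    simp
  have hb1 : ((0:ℝ):ℂ) + I/a ∈ Complex.slitPlane := by
    rw [Complex.mem_slitPlane_iff]
    right; rw [him]; positivity
  have hb2 : (1 : ℂ) + I*a*(0:ℝ) ∈ Complex.slitPlane := by
    rw [Complex.mem_slitPlane_iff]; left; simp
  have hf1 : ContinuousAt (fun t : ℝ => ((t:ℂ) + I/(a:ℂ))) 0 := by fun_prop
  have h1 : ContinuousAt (fun t : ℝ => ((t:ℂ) + I/a) ^ (1/2:ℂ)) 0 :=
    ContinuousAt.comp (x := (0:ℝ)) (g := (· ^ (1/2:ℂ)))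
      (f := fun t : ℝ => (t:ℂ) + I/(a:ℂ)) (continuousAt_cpow_const hb1) hf1
  have hf2 : ContinuousAt (fun t : ℝ => ((1:ℂ) + I*(a:ℂ)*(t:ℂ))) 0 := by fun_prop
  have h2 : ContinuousAt (fun t : ℝ => ((1:ℂ) + I*a*t) ^ (1/2:ℂ)) 0 :=
    ContinuousAt.comp (x := (0:ℝ)) (g := (· ^ (1/2:ℂ)))
      (f := fun t : ℝ => (1:ℂ) + I*(a:ℂ)*(t:ℂ)) (continuousAt_cpow_const hb2) hf2
  have hd1 : (((0:ℝ):ℂ) + I/a) ^ (1/2:ℂ) ≠ 0 := by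
    rw [Ne, Complex.cpow_eq_zero_iff]
    rintro ⟨h, -⟩
    rw [h] at him
    simp at him
    exact absurd him.symm (by positivity)
  have hd2 : ((1:ℂ) + I*a*(0:ℝ)) ^ (1/2:ℂ) ≠ 0 := by
    rw [Ne, Complex.cpow_eq_zero_iff]
    rintro ⟨h, -⟩
    simp at h
  have hc : ContinuousAt (phi a) 0 := by
    apply ContinuousAt.div (by fun_prop) (h1.mul h2) (mul_ne_zero hd1 hd2)
  exact hc.tendsto

lemma left_id {b : ℕ} (hb : a = 2*b) {t : ℝ} (ht : 0 < t) :
    (a:ℂ) * (Real.sqrt t : ℂ) * jacobiTheta₂ 0 (-1/(a:ℂ) + I*t)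
      = phi a t * jacobiTheta₂ 0 (1/(a:ℂ) + I/((a:ℂ)^2*(t:ℂ))) := by
  have haR : (0:ℝ) < a := by exact_mod_cast ha
  have haC : (a:ℂ) ≠ 0 := by exact_mod_cast ha.ne'
  have htC : (t:ℂ) ≠ 0 := by exact_mod_cast ht.ne'
  set τ : ℂ := -1/(a:ℂ) + I*t with hτdef
  have hτ : τ ≠ 0 := by
    intro h
    have := congrArg Complex.im h
    simp [hτdef] at this
    exact ht.ne' this
  have hτa : (a:ℂ)*τ = -1 + I*(a:ℂ)*(t:ℂ) := by
    rw [hτdef]; field_simp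
  set w : ℂ := -I*(a:ℂ)*(t:ℂ)/τ with hwdef
  have hwτ : w*τ = -I*(a:ℂ)*(t:ℂ) := by
    rw [hwdef]; exact div_mul_cancel₀ _ hτ
  have hwne : w ≠ 0 := by
    rw [hwdef]
    exact div_ne_zero (by simp [I_ne_zero, haC, htC]) hτ
  have hntpos : (0:ℝ) < 1/(a:ℝ)^2 + t^2 := by positivity
  set nt : ℝ := 1/(a:ℝ)^2 + t^2 with hntdef
  have hntC : ((nt:ℝ):ℂ) ≠ 0 := by exact_mod_cast hntpos.ne'
  have h1 : jacobiTheta₂ 0 τ = 1/(-I*τ)^(1/2:ℂ) * jacobiTheta₂ 0 (-1/τ) := by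
    simpa using jacobiTheta₂_functional_equation 0 τ
  have h2 : -1/τ = w + (a:ℂ) := by
    rw [eq_comm, eq_div_iff hτ]
    linear_combination hwτ + hτa
  have per : Function.Periodic (jacobiTheta₂ 0) 2 := fun σ => jacobiTheta₂_add_right 0 σ
  have h3 : jacobiTheta₂ 0 (w + (a:ℂ)) = jacobiTheta₂ 0 w := by
    have := (per.nat_mul b) w
    rwa [show ((b:ℂ) * 2) = (a:ℂ) by push_cast [hb]; ring] at this
  have h4 : jacobiTheta₂ 0 w = 1/(-I*w)^(1/2:ℂ) * jacobiTheta₂ 0 (-1/w) := by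
    simpa using jacobiTheta₂_functional_equation 0 w
  have ha2t : ((a:ℂ)^2*(t:ℂ)) ≠ 0 := by
    exact mul_ne_zero (pow_ne_zero 2 haC) htC
  have h5' : -1/w = ((a:ℂ)*(t:ℂ) + I)/((a:ℂ)^2*(t:ℂ)) := by
    rw [div_eq_div_iff hwne ha2t]
    linear_combination (I*(a:ℂ))*hwτ - (I*w)*hτa
      - ((a:ℂ)^2*(t:ℂ) + (a:ℂ)*(t:ℂ)*w)*Complex.I_sq
  have h5 : -1/w = 1/(a:ℂ) + I/((a:ℂ)^2*(t:ℂ)) := by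
    rw [h5']; field_simp
  have hone : ((1:ℂ) + I*(a:ℂ)*(t:ℂ)) ≠ 0 := by
    intro h
    have := congrArg Complex.re h
    simp at this
  have hntc : ((nt:ℝ):ℂ) = 1/(a:ℂ)^2 + (t:ℂ)^2 := by
    rw [hntdef]; push_cast; ring
  have h6 : -I*w = (((t/nt : ℝ)):ℂ) * (1 + I*(a:ℂ)*(t:ℂ)) := by
    rw [Complex.ofReal_div, div_mul_eq_mul_div, eq_div_iff hntC, hntc]
    field_simp
    linear_combination (I*(a:ℂ)*(1+I*(a:ℂ)*(t:ℂ)))*hwτ - (I*(1+I*(a:ℂ)*(t:ℂ))*w)*hτa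
      - (I*w*(a:ℂ)^2*(t:ℂ)^2 + (a:ℂ)^2*(t:ℂ)*(1+I*(a:ℂ)*(t:ℂ)))*Complex.I_sq
  have h7 : (-I*w)^(1/2:ℂ) = ((Real.sqrt t / Real.sqrt nt : ℝ):ℂ) * (1+I*(a:ℂ)*(t:ℂ))^(1/2:ℂ) := by
    rw [h6, cpow_half_ofReal_mul (by positivity) hone, ofReal_cpow_half (by positivity),
      Real.sqrt_div ht.le]
  have h9 : -I*τ = (t:ℂ) + I/(a:ℂ) := by
    field_simp
    linear_combination (-I)*hτa - ((a:ℂ)*(t:ℂ))*Complex.I_sq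
  have hcp1 : ((t:ℂ) + I/(a:ℂ))^(1/2:ℂ) ≠ 0 := by
    rw [Ne, Complex.cpow_eq_zero_iff]
    rintro ⟨h, -⟩
    have := congrArg Complex.im h
    simp at this
    exact absurd this (by positivity)
  have hcp2 : ((1:ℂ)+I*(a:ℂ)*(t:ℂ))^(1/2:ℂ) ≠ 0 := by
    rw [Ne, Complex.cpow_eq_zero_iff]
    rintro ⟨h, -⟩
    exact hone h
  have hst : ((Real.sqrt t : ℝ):ℂ) ≠ 0 := by
    exact_mod_cast (Real.sqrt_pos.mpr ht).ne'
  have hsnt : ((Real.sqrt nt : ℝ):ℂ) ≠ 0 := by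
    exact_mod_cast (Real.sqrt_pos.mpr hntpos).ne'
  rw [h1, h2, h3, h4, h5, h7, h9, phi, Complex.ofReal_div, ← hntdef]
  set θ := jacobiTheta₂ 0 (1/(a:ℂ) + I/((a:ℂ)^2*(t:ℂ))) with hθdef
  set C1 := ((t:ℂ) + I/(a:ℂ))^(1/2:ℂ) with hC1
  set C2 := ((1:ℂ)+I*(a:ℂ)*(t:ℂ))^(1/2:ℂ) with hC2
  field_simp

lemma main_id {b : ℕ} (hb : a = 2*b) {t : ℝ} (ht : 0 < t) :
    (a:ℂ) * (Real.sqrt t : ℂ) * jacobiTheta₂ 0 (-1/(a:ℂ) + I*(t:ℂ))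
      = ∑ r ∈ range a, cexp (-(↑π)*I*(r:ℂ)^2/(a:ℂ))
          * jacobiTheta₂ ((r:ℂ)/(a:ℂ)) (I/((a:ℂ)^2*(t:ℂ))) := by
  haveI : NeZero a := ⟨ha.ne'⟩
  have haR : (0:ℝ) < a := by exact_mod_cast ha
  have haC : (a:ℂ) ≠ 0 := by exact_mod_cast ha.ne'
  have hbpos : 0 < b := by omega
  have hbC : (b:ℂ) ≠ 0 := by exact_mod_cast hbpos.ne'
  have htC : (t:ℂ) ≠ 0 := by exact_mod_cast ht.ne'
  have hIa2t : (I*(a:ℂ)^2*(t:ℂ)) ≠ 0 :=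
    mul_ne_zero (mul_ne_zero I_ne_zero (pow_ne_zero 2 haC)) htC
  have ha2t : ((a:ℂ)^2*(t:ℂ)) ≠ 0 := mul_ne_zero (pow_ne_zero 2 haC) htC
  have hst : ((Real.sqrt t : ℝ):ℂ) ≠ 0 := by exact_mod_cast (Real.sqrt_pos.mpr ht).ne'
  have hI2 : (I:ℂ)^2 = -1 := Complex.I_sq
  have hI3 : (I:ℂ)^3 = -I := by rw [pow_succ, hI2]; ring
  set τ : ℂ := -1/(a:ℂ) + I*(t:ℂ) with hτdef
  have hτim : 0 < τ.im := by rw [hτdef]; simpa using ht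
  have hFE : ∀ R : ℕ, jacobiTheta₂ (I*(a:ℂ)*(R:ℂ)*(t:ℂ)) (I*(a:ℂ)^2*(t:ℂ))
      = 1/((a:ℂ)*(Real.sqrt t:ℂ)) * cexp ((↑π)*(R:ℂ)^2*(t:ℂ))
        * jacobiTheta₂ ((R:ℂ)/(a:ℂ)) (I/((a:ℂ)^2*(t:ℂ))) := by
    intro R
    rw [jacobiTheta₂_functional_equation (I*(a:ℂ)*(R:ℂ)*(t:ℂ)) (I*(a:ℂ)^2*(t:ℂ)),
      show -I*(I*(a:ℂ)^2*(t:ℂ)) = (((a:ℝ)^2*t :ℝ):ℂ) by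
        push_cast; ring_nf; simp only [hI2, hI3]; try ring,
      ofReal_cpow_half (by positivity),
      show Real.sqrt ((a:ℝ)^2*t) = (a:ℝ)*Real.sqrt t by
        rw [Real.sqrt_mul (sq_nonneg _), Real.sqrt_sq haR.le],
      show -(↑π)*I*(I*(a:ℂ)*(R:ℂ)*(t:ℂ))^2/(I*(a:ℂ)^2*(t:ℂ)) = (↑π)*(R:ℂ)^2*(t:ℂ) by
        rw [div_eq_iff hIa2t]
        ring_nf; simp only [hI2, hI3]; try ring,
      show (I*(a:ℂ)*(R:ℂ)*(t:ℂ))/(I*(a:ℂ)^2*(t:ℂ)) = (R:ℂ)/(a:ℂ) by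
        rw [div_eq_div_iff hIa2t haC]; ring,
      show -1/(I*(a:ℂ)^2*(t:ℂ)) = I/((a:ℂ)^2*(t:ℂ)) by
        rw [div_eq_div_iff hIa2t ha2t]
        ring_nf; simp only [hI2, hI3]; try ring]
    push_cast
    ring
  have hterm : ∀ (R : ℕ) (q : ℤ), jacobiTheta₂_term (q*(a:ℤ) + (R:ℤ)) 0 τ
      = cexp (-(↑π)*I*(R:ℂ)^2/(a:ℂ)) * cexp (-(↑π)*(R:ℂ)^2*(t:ℂ))
        * jacobiTheta₂_term q (I*(a:ℂ)*(R:ℂ)*(t:ℂ)) (I*(a:ℂ)^2*(t:ℂ)) := by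
    intro R q
    rw [jacobiTheta₂_term, jacobiTheta₂_term, ← Complex.exp_add, ← Complex.exp_add,
      Complex.exp_eq_exp_iff_exists_int]
    refine ⟨-(q^2*(b:ℤ) + q*(R:ℤ)), ?_⟩
    rw [hτdef, hb]
    push_cast
    field_simp
    ring_nf
    simp only [hI2, hI3]
    ring
  -- residue decomposition
  have hsum : Summable (fun n : ℤ => jacobiTheta₂_term n 0 τ) :=
    (summable_jacobiTheta₂_term_iff 0 τ).mpr hτim
  set e : Fin a × ℤ ≃ ℤ := (Equiv.prodComm (Fin a) ℤ).trans (Int.divModEquiv a).symm with hedef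
  have he : ∀ p : Fin a × ℤ, e p = p.2 * (a:ℤ) + ((p.1 : ℕ) : ℤ) := by
    intro p
    simp [hedef, Int.divModEquiv]
  have key : Summable ((fun n : ℤ => jacobiTheta₂_term n 0 τ) ∘ e) :=
    (Equiv.summable_iff e).mpr hsum
  have hsum2 : Summable (fun p : Fin a × ℤ =>
      jacobiTheta₂_term (p.2*(a:ℤ) + ((p.1 : ℕ):ℤ)) 0 τ) := by
    refine key.congr (fun p => ?_)
    rw [Function.comp_apply, he p]
  have hsplit : jacobiTheta₂ 0 τ
      = ∑ r : Fin a, ∑' q : ℤ, jacobiTheta₂_term (q*(a:ℤ) + ((r:ℕ):ℤ)) 0 τ := by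
    calc jacobiTheta₂ 0 τ = ∑' n : ℤ, jacobiTheta₂_term n 0 τ := rfl
      _ = ∑' p : Fin a × ℤ, jacobiTheta₂_term (e p) 0 τ :=
          (e.tsum_eq (fun n => jacobiTheta₂_term n 0 τ)).symm
      _ = ∑' p : Fin a × ℤ, jacobiTheta₂_term (p.2*(a:ℤ)+((p.1:ℕ):ℤ)) 0 τ :=
          tsum_congr (fun p => by rw [he p])
      _ = ∑' r : Fin a, ∑' q : ℤ, jacobiTheta₂_term (q*(a:ℤ)+((r:ℕ):ℤ)) 0 τ :=
          Summable.tsum_prod' hsum2 (fun r => hsum2.prod_factor r)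
      _ = ∑ r : Fin a, ∑' q : ℤ, jacobiTheta₂_term (q*(a:ℤ)+((r:ℕ):ℤ)) 0 τ :=
          tsum_fintype _
  have hinner : ∀ r : Fin a, ∑' q : ℤ, jacobiTheta₂_term (q*(a:ℤ) + ((r:ℕ):ℤ)) 0 τ
      = cexp (-(↑π)*I*((r:ℕ):ℂ)^2/(a:ℂ)) * cexp (-(↑π)*((r:ℕ):ℂ)^2*(t:ℂ))
        * jacobiTheta₂ (I*(a:ℂ)*((r:ℕ):ℂ)*(t:ℂ)) (I*(a:ℂ)^2*(t:ℂ)) := by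
    intro r
    rw [jacobiTheta₂, ← tsum_mul_left]
    exact tsum_congr (fun q => hterm (r:ℕ) q)
  have hA : (a:ℂ)*((Real.sqrt t : ℝ):ℂ) ≠ 0 := mul_ne_zero haC hst
  calc (a:ℂ) * (Real.sqrt t : ℂ) * jacobiTheta₂ 0 τ
      = ∑ r : Fin a, (a:ℂ) * (Real.sqrt t : ℂ) *
          (cexp (-(↑π)*I*((r:ℕ):ℂ)^2/(a:ℂ)) * cexp (-(↑π)*((r:ℕ):ℂ)^2*(t:ℂ))
            * jacobiTheta₂ (I*(a:ℂ)*((r:ℕ):ℂ)*(t:ℂ)) (I*(a:ℂ)^2*(t:ℂ))) := by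
        rw [hsplit, Finset.mul_sum]
        exact Finset.sum_congr rfl (fun r _ => by rw [hinner r])
    _ = ∑ r : Fin a, cexp (-(↑π)*I*((r:ℕ):ℂ)^2/(a:ℂ))
          * jacobiTheta₂ (((r:ℕ):ℂ)/(a:ℂ)) (I/((a:ℂ)^2*(t:ℂ))) := by
        refine Finset.sum_congr rfl (fun r _ => ?_)
        have hexp : cexp (-(↑π)*((r:ℕ):ℂ)^2*(t:ℂ)) * cexp ((↑π)*((r:ℕ):ℂ)^2*(t:ℂ)) = 1 := by
          rw [← Complex.exp_add, show -(↑π)*((r:ℕ):ℂ)^2*(t:ℂ) + (↑π)*((r:ℕ):ℂ)^2*(t:ℂ) = 0 by ring,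
            Complex.exp_zero]
        rw [hFE (r:ℕ),
          show (a:ℂ)*(Real.sqrt t:ℂ) * (cexp (-(↑π)*I*((r:ℕ):ℂ)^2/(a:ℂ))
              * cexp (-(↑π)*((r:ℕ):ℂ)^2*(t:ℂ))
              * (1/((a:ℂ)*(Real.sqrt t:ℂ)) * cexp ((↑π)*((r:ℕ):ℂ)^2*(t:ℂ))
                * jacobiTheta₂ (((r:ℕ):ℂ)/(a:ℂ)) (I/((a:ℂ)^2*(t:ℂ)))))
            = ((a:ℂ)*(Real.sqrt t:ℂ) * (1/((a:ℂ)*(Real.sqrt t:ℂ))))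
              * ((cexp (-(↑π)*((r:ℕ):ℂ)^2*(t:ℂ)) * cexp ((↑π)*((r:ℕ):ℂ)^2*(t:ℂ)))
                * (cexp (-(↑π)*I*((r:ℕ):ℂ)^2/(a:ℂ))
                  * jacobiTheta₂ (((r:ℕ):ℂ)/(a:ℂ)) (I/((a:ℂ)^2*(t:ℂ))))) from by ring,
          mul_one_div_cancel hA, hexp, one_mul, one_mul]
    _ = ∑ r ∈ range a, cexp (-(↑π)*I*(r:ℂ)^2/(a:ℂ))
          * jacobiTheta₂ ((r:ℂ)/(a:ℂ)) (I/((a:ℂ)^2*(t:ℂ))) := by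
        exact Fin.sum_univ_eq_sum_range
          (fun n : ℕ => cexp (-(↑π)*I*(n:ℂ)^2/(a:ℂ))
            * jacobiTheta₂ ((n:ℂ)/(a:ℂ)) (I/((a:ℂ)^2*(t:ℂ)))) a

lemma gauss_sum {b : ℕ} (hb : a = 2*b) :
    ∑ r ∈ range a, cexp (-(↑π)*I*(r:ℂ)^2/(a:ℂ))
      = (Real.sqrt a : ℂ) * cexp (-(↑π) * I / 4) := by
  have haR : (0:ℝ) < a := by exact_mod_cast ha
  have h1 : Tendsto (fun t : ℝ => (a:ℝ)^2*t) (𝓝[>](0:ℝ)) (𝓝[>](0:ℝ)) := by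
    rw [tendsto_nhdsWithin_iff]
    constructor
    · have : Tendsto (fun t : ℝ => (a:ℝ)^2*t) (𝓝 0) (𝓝 ((a:ℝ)^2*0)) :=
        (continuous_const.mul continuous_id).tendsto (0:ℝ)
      rw [mul_zero] at this
      exact this.mono_left nhdsWithin_le_nhds
    · filter_upwards [self_mem_nhdsWithin] with t ht
      exact mul_pos (by positivity : (0:ℝ) < (a:ℝ)^2) ht
  have h2 : Tendsto (fun t : ℝ => ((a:ℝ)^2*t)⁻¹) (𝓝[>](0:ℝ)) atTop :=
    tendsto_inv_nhdsGT_zero.comp h1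
  have himeq : ∀ᶠ (t : ℝ) in 𝓝[>](0:ℝ), (I/((a:ℂ)^2*(t:ℂ))).im = ((a:ℝ)^2*t)⁻¹ := by
    filter_upwards [self_mem_nhdsWithin] with t ht
    rw [show ((a:ℂ)^2*(t:ℂ)) = (((a:ℝ)^2*t : ℝ):ℂ) by push_cast; ring,
      Complex.div_ofReal_im]
    simp [one_div]
  have him : Tendsto (fun t : ℝ => (I/((a:ℂ)^2*(t:ℂ))).im) (𝓝[>](0:ℝ)) atTop :=
    h2.congr' (by filter_upwards [himeq] with t ht using ht.symm)
  have him2 : Tendsto (fun t : ℝ => ((1:ℂ)/(a:ℂ) + I/((a:ℂ)^2*(t:ℂ))).im)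
      (𝓝[>](0:ℝ)) atTop := by
    refine him.congr' ?_
    filter_upwards [self_mem_nhdsWithin] with t ht
    rw [Complex.add_im, show ((1:ℂ)/(a:ℂ)) = (((1/(a:ℝ)):ℝ):ℂ) by push_cast; ring,
      Complex.ofReal_im, zero_add]
  -- limit of RHS of main identity
  have hR : Tendsto (fun t : ℝ => ∑ r ∈ range a, cexp (-(↑π)*I*(r:ℂ)^2/(a:ℂ))
        * jacobiTheta₂ ((r:ℂ)/(a:ℂ)) (I/((a:ℂ)^2*(t:ℂ)))) (𝓝[>](0:ℝ))
      (𝓝 (∑ r ∈ range a, cexp (-(↑π)*I*(r:ℂ)^2/(a:ℂ)))) := by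
    have : Tendsto (fun t : ℝ => ∑ r ∈ range a, cexp (-(↑π)*I*(r:ℂ)^2/(a:ℂ))
        * jacobiTheta₂ ((r:ℂ)/(a:ℂ)) (I/((a:ℂ)^2*(t:ℂ)))) (𝓝[>](0:ℝ))
        (𝓝 (∑ r ∈ range a, cexp (-(↑π)*I*(r:ℂ)^2/(a:ℂ)) * 1)) := by
      apply tendsto_finset_sum
      intro r _
      exact tendsto_const_nhds.mul
        (theta_tendsto_one (by
          rw [show ((r:ℂ)/(a:ℂ)) = (((r/(a:ℝ)):ℝ):ℂ) by push_cast; ring]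
          exact Complex.ofReal_im _) him)
    simpa using this
  -- limit of LHS expression
  have hL : Tendsto (fun t : ℝ => phi a t
        * jacobiTheta₂ 0 ((1:ℂ)/(a:ℂ) + I/((a:ℂ)^2*(t:ℂ)))) (𝓝[>](0:ℝ))
      (𝓝 ((Real.sqrt a : ℂ) * cexp (-(↑π) * I / 4))) := by
    have := (phi_tendsto ha).mul (theta_tendsto_one (z := 0) rfl him2)
    simpa using this
  -- the two functions agree
  have hEq : ∀ᶠ (t : ℝ) in 𝓝[>](0:ℝ), (fun t : ℝ => ∑ r ∈ range a, cexp (-(↑π)*I*(r:ℂ)^2/(a:ℂ))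
        * jacobiTheta₂ ((r:ℂ)/(a:ℂ)) (I/((a:ℂ)^2*(t:ℂ)))) t
      = (fun t : ℝ => phi a t * jacobiTheta₂ 0 ((1:ℂ)/(a:ℂ) + I/((a:ℂ)^2*(t:ℂ)))) t := by
    filter_upwards [self_mem_nhdsWithin] with t ht
    have e1 := main_id ha hb ht
    have e2 := left_id ha hb ht
    rw [← e1, e2]
  exact tendsto_nhds_unique (hR.congr' hEq) hL

omit ha in
lemma sum_range_zmod [NeZero a] (G : ZMod a → ℂ) :
    ∑ n ∈ range a, G (n : ZMod a) = ∑ x : ZMod a, G x := by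
  refine Finset.sum_nbij' (fun n => (n : ZMod a)) (fun x => x.val) ?_ ?_ ?_ ?_ ?_
  · intro n _; exact Finset.mem_univ _
  · intro x _; exact Finset.mem_range.mpr (ZMod.val_lt x)
  · intro n hn; exact ZMod.val_cast_of_lt (Finset.mem_range.mp hn)
  · intro x _; exact ZMod.natCast_rightInverse x
  · intro n _; rfl

lemma shifted {b : ℕ} (hb : a = 2*b) (d : ℤ) :
    ∑ n ∈ range a, cexp (-(↑π)*I*(((n:ℤ) - d : ℤ):ℂ)^2/(a:ℂ))
      = ∑ n ∈ range a, cexp (-(↑π)*I*(n:ℂ)^2/(a:ℂ)) := by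
  haveI : NeZero a := ⟨ha.ne'⟩
  have hbC : (b:ℂ) ≠ 0 := by
    have : 0 < b := by omega
    exact_mod_cast this.ne'
  set f : ℤ → ℂ := fun m => cexp (-(↑π)*I*(m:ℂ)^2/(a:ℂ)) with hfdef
  have hper : ∀ m k : ℤ, f (m + k*(a:ℤ)) = f m := by
    intro m k
    rw [hfdef]
    simp only
    rw [Complex.exp_eq_exp_iff_exists_int]
    refine ⟨-(m*k + k^2*(b:ℤ)), ?_⟩
    rw [hb]
    push_cast
    field_simp
    ring
  set F : ZMod a → ℂ := fun x => f (x.val : ℤ) with hFdef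
  have hmodF : ∀ m : ℤ, f m = F ((m : ZMod a)) := by
    intro m
    rw [hFdef]
    simp only
    rw [show (((m : ZMod a).val : ℤ)) = m % (a:ℤ) from ZMod.val_intCast m]
    conv_lhs => rw [← Int.emod_add_ediv_mul m (a:ℤ)]
    exact hper (m % (a:ℤ)) (m / (a:ℤ))
  calc ∑ n ∈ range a, cexp (-(↑π)*I*(((n:ℤ) - d : ℤ):ℂ)^2/(a:ℂ))
      = ∑ n ∈ range a, F (((n:ℤ) - d : ℤ) : ZMod a) := by
        exact Finset.sum_congr rfl (fun n _ => hmodF ((n:ℤ) - d))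
    _ = ∑ n ∈ range a, (fun x : ZMod a => F (x - (d : ZMod a))) ((n:ℕ) : ZMod a) := by
        refine Finset.sum_congr rfl (fun n _ => ?_)
        congr 1
        push_cast
        ring
    _ = ∑ x : ZMod a, F (x - (d : ZMod a)) := by exact sum_range_zmod (fun x : ZMod a => F (x - (d : ZMod a)))
    _ = ∑ x : ZMod a, F x :=
        Fintype.sum_equiv (Equiv.subRight ((d : ZMod a))) _ _ (fun x => rfl)
    _ = ∑ n ∈ range a, F ((n:ℕ) : ZMod a) := (sum_range_zmod F).symm
    _ = ∑ n ∈ range a, cexp (-(↑π)*I*(n:ℂ)^2/(a:ℂ)) := by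
        refine Finset.sum_congr rfl (fun n _ => ?_)
        rw [show ((n:ℕ) : ZMod a) = ((n : ℤ) : ZMod a) by push_cast; rfl, ← hmodF (n:ℤ)]
        rw [hfdef]
        push_cast
        rfl

end main

/-- Let `a` be an even positive integer and `d` an integer. Then
`∑_{n=0}^{a-1} e^{iπ(2dn - n²)/a} = √a · e^{iπ(d²/a - 1/4)}`,
where `√a` is the positive real square root of `a`. -/
theorem stmt6 (a : ℕ) (ha : 0 < a) (hae : Even a) (d : ℤ) :
    ∑ n ∈ Finset.range a,
        Complex.exp (Complex.I * Real.pi * (2 * (d : ℂ) * (n : ℂ) - (n : ℂ) ^ 2) / (a : ℂ)) =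
      (Real.sqrt a : ℂ) *
        Complex.exp (Complex.I * Real.pi * ((d : ℂ) ^ 2 / (a : ℂ) - 1 / 4)) := by
  obtain ⟨b, hb2⟩ := hae
  have hb : a = 2*b := by omega
  have haC : (a:ℂ) ≠ 0 := by exact_mod_cast ha.ne'
  have step1 : ∀ n : ℕ,
      Complex.exp (Complex.I * Real.pi * (2 * (d : ℂ) * (n : ℂ) - (n : ℂ) ^ 2) / (a : ℂ))
        = cexp (I * (π:ℝ) * (d:ℂ)^2/(a:ℂ)) * cexp (-(↑π)*I*(((n:ℤ) - d : ℤ):ℂ)^2/(a:ℂ)) := by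
    intro n
    rw [← Complex.exp_add]
    congr 1
    push_cast
    field_simp
    ring
  rw [Finset.sum_congr rfl (fun n _ => step1 n), ← Finset.mul_sum, shifted ha hb d,
    gauss_sum ha hb, ← mul_assoc, mul_comm (cexp (I * (π:ℝ) * (d:ℂ)^2/(a:ℂ))) _, mul_assoc,
    ← Complex.exp_add]
  congr 2
  field_simp
  ring

end
end

section
/- Let a > 0, let ℏ > 0, and let s, t be real numbers with 0 < tℏ < a and e^{isa} ≠ 1. For x ∈ [0,a) write τ(x) = x + tℏ - a·⌊(x+tℏ)/a⌋ (translation by tℏ with wraparound). Then for every x ∈ [0,a) with x + tℏ ≥ a, e^{isx} ≠ e^{-istℏ} · e^{is·τ(x)}. Consequently, for the multiplication operator (M_s f)(x) = e^{isx} f(x) and the wraparound translation operator (T_t f)(x) = f(τ(x)) on functions on [0,a), the Weyl commutation relation M_s ∘ T_t = e^{-istℏ} · (T_t ∘ M_s) fails: the two sides differ, applied to the constant function 1, at every point x ∈ [a - tℏ, a). -/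
open Complex

/-- Let `a > 0`, `ℏ > 0`, and `s, t` reals with `0 < tℏ < a` and
`e^{isa} ≠ 1`. Write `τ(x) = x + tℏ - a·⌊(x+tℏ)/a⌋` (translation by `tℏ` with wraparound).
Then for every `x ∈ [0,a)` with `x + tℏ ≥ a`, `e^{isx} ≠ e^{-istℏ}·e^{is·τ(x)}`.
Consequently, for the multiplication operator `(M f)(x) = e^{isx} f(x)` and the wraparound
translation `(T f)(x) = f(τ(x))`, the Weyl relation `M ∘ T = e^{-istℏ}·(T ∘ M)` fails:
the two sides, applied to the constant function `1`, differ at every `x ∈ [a - tℏ, a)`. -/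
theorem stmt14 (a ℏ s t : ℝ) (ha : 0 < a) (hℏ : 0 < ℏ)
    (htℏ : 0 < t * ℏ) (htℏa : t * ℏ < a)
    (hsa : Complex.exp (Complex.I * (s : ℂ) * (a : ℂ)) ≠ 1)
    (τ : ℝ → ℝ) (hτ : ∀ x : ℝ, τ x = x + t * ℏ - a * ⌊(x + t * ℏ) / a⌋)
    (M T : (ℝ → ℂ) → (ℝ → ℂ))
    (hM : ∀ (f : ℝ → ℂ) (x : ℝ), M f x = Complex.exp (Complex.I * (s : ℂ) * (x : ℂ)) * f x)
    (hT : ∀ (f : ℝ → ℂ) (x : ℝ), T f x = f (τ x)) :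
    (∀ x : ℝ, 0 ≤ x → x < a → a ≤ x + t * ℏ →
      Complex.exp (Complex.I * (s : ℂ) * (x : ℂ)) ≠
        Complex.exp (-(Complex.I * (s : ℂ) * ((t * ℏ : ℝ) : ℂ))) *
          Complex.exp (Complex.I * (s : ℂ) * ((τ x : ℝ) : ℂ))) ∧
    (∀ x : ℝ, a - t * ℏ ≤ x → x < a →
      M (T (fun _ => 1)) x ≠
        Complex.exp (-(Complex.I * (s : ℂ) * ((t * ℏ : ℝ) : ℂ))) * T (M (fun _ => 1)) x) := by
  have key : ∀ x : ℝ, 0 ≤ x → x < a → a ≤ x + t * ℏ →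
      Complex.exp (Complex.I * (s : ℂ) * (x : ℂ)) ≠
        Complex.exp (-(Complex.I * (s : ℂ) * ((t * ℏ : ℝ) : ℂ))) *
          Complex.exp (Complex.I * (s : ℂ) * ((τ x : ℝ) : ℂ)) := by
    intro x hx0 hxa hax
    have hfl : ⌊(x + t * ℏ) / a⌋ = 1 := by
      rw [Int.floor_eq_iff]
      constructor
      · push_cast
        rw [le_div_iff₀ ha]
        linarith
      · push_cast
        rw [div_lt_iff₀ ha]
        linarith
    have hτx : τ x = x + t * ℏ - a := by
      rw [hτ, hfl]; push_cast; ring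
    rw [hτx]
    intro h
    apply hsa
    have hrw : Complex.exp (-(Complex.I * (s : ℂ) * ((t * ℏ : ℝ) : ℂ))) *
        Complex.exp (Complex.I * (s : ℂ) * ((x + t * ℏ - a : ℝ) : ℂ)) =
        Complex.exp (Complex.I * (s : ℂ) * (x : ℂ)) *
        Complex.exp (-(Complex.I * (s : ℂ) * (a : ℂ))) := by
      rw [← Complex.exp_add, ← Complex.exp_add]
      congr 1
      push_cast
      ring
    rw [hrw] at h
    have hne : Complex.exp (Complex.I * (s : ℂ) * (x : ℂ)) ≠ 0 := Complex.exp_ne_zero _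
    have h2 : Complex.exp (-(Complex.I * (s : ℂ) * (a : ℂ))) = 1 := by
      have := mul_left_cancel₀ hne (show Complex.exp (Complex.I * (s : ℂ) * (x : ℂ)) * 1 = Complex.exp (Complex.I * (s : ℂ) * (x : ℂ)) * Complex.exp (-(Complex.I * (s : ℂ) * (a : ℂ))) by rw [mul_one]; exact h)
      exact this.symm
    rw [Complex.exp_neg, inv_eq_one] at h2
    exact h2
  exact ⟨key, by
    intro x hx1 hx2
    have hx0 : 0 ≤ x := le_trans (by linarith) hx1
    have hax : a ≤ x + t * ℏ := by linarith
    have := key x hx0 hx2 hax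
    rw [hM, hT, hT, hM]; simp only [mul_one]
    exact this⟩
end
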